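/- (Dirac equation in the homogeneous field on the lattice.) Let m ≥ 0, ε > 0, and ξ, η ∈ εℤ with ξ, η > 0. Then: a₁(ξ−η+ε, ξ+η+ε, m, ε, u_ε) = (1/√(1+m²ε²)) · u_ε(ξ−η+3ε/2, ξ+η+ε/2) · ( a₁(ξ−η+2ε, ξ+η, m, ε, u_ε) + mε·a₂(ξ−η+2ε, ξ+η, m, ε, u_ε) ), and a₂(ξ−η+ε, ξ+η+ε, m, ε, u_ε) = (1/√(1+m²ε²)) · u_ε(ξ−η+ε/2, ξ+η+ε/2) · ( −mε·a₁(ξ−η, ξ+η, m, ε, u_ε) + a₂(ξ−η, ξ+η, m, ε, u_ε) ). -/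

import Mathlib

open scoped BigOperators

/-- Direction of a checker move encoded by a Boolean: `true` = upwards-right
(vector `(ε,ε)`), `false` = upwards-left (vector `(-ε,ε)`). -/
def dirZ (b : Bool) : ℤ := if b then 1 else -1

/-- The `k`-th direction of a path with `n` moves (dummy value `false` out of range). -/
def extd {n : ℕ} (d : Fin n → Bool) (k : ℕ) : Bool := if h : k < n then d ⟨k, h⟩ else false

/-- The (integer) space coordinate of a checker path after `k` moves. -/
def pathPos {n : ℕ} (d : Fin n → Bool) (k : ℕ) : ℤ := ∑ i ∈ Finset.range k, dirZ (extd d i)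

/-- The number of turns of a checker path. -/
def pathTurns {n : ℕ} (d : Fin n → Bool) : ℕ :=
  ((Finset.range n).filter (fun k => 0 < k ∧ extd d (k - 1) ≠ extd d k)).card

/-- Feynman checkers wave function `a(x,t,m,ε,u)` in an external field `u`, where the field
`u` is given as a function of the midpoint of an auxiliary edge. -/
noncomputable def kwf (m ε : ℝ) (u : ℝ → ℝ → ℝ) (x t : ℝ) : ℂ :=
  (((1 + m ^ 2 * ε ^ 2) ^ ((1 - t / ε) / 2) : ℝ) : ℂ) * Complex.I *
    ∑ d ∈ Finset.univ.filter
        (fun d : Fin ((⌊t / ε⌋).toNat) → Bool =>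
          extd d 0 = true ∧ pathPos d ((⌊t / ε⌋).toNat) = ⌊x / ε⌋),
      (-(Complex.I) * (m * ε)) ^ (pathTurns d) *
        ∏ k ∈ Finset.range ((⌊t / ε⌋).toNat),
          ((u (ε * pathPos d k + ε * (dirZ (extd d k)) / 2) (ε * k + ε / 2) : ℝ) : ℂ)

/-- `a₁(x,t,m,ε,u)`: the real part of the wave function. -/
noncomputable def ka1 (m ε : ℝ) (u : ℝ → ℝ → ℝ) (x t : ℝ) : ℝ := (kwf m ε u x t).re

/-- `a₂(x,t,m,ε,u)`: the imaginary part of the wave function. -/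
noncomputable def ka2 (m ε : ℝ) (u : ℝ → ℝ → ℝ) (x t : ℝ) : ℝ := (kwf m ε u x t).im

/-- `P(x,t,m,ε,u)`: the probability to find the electron at `(x,t)`. -/
noncomputable def kP (m ε : ℝ) (u : ℝ → ℝ → ℝ) (x t : ℝ) : ℝ := ‖kwf m ε u x t‖ ^ 2

/- The homogeneous electromagnetic field `u_ε`, as a function of the midpoint `(X,T)`
of an auxiliary edge: for `(x,t) ∈ εℤ²`, `u_ε(x+ε/2, t+ε/2) = -1` iff `(t-x)/(4ε) ∈ ℤ`. -/
open Classical in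
noncomputable def uhom (ε : ℝ) : ℝ → ℝ → ℝ := fun X T =>
  if ∃ k : ℤ, T - X = 4 * ε * k then -1 else 1
/-- Extended binomial coefficient: `C(a,b) = 0` if `a < 0` or `b < 0`. -/
def zchoose (a b : ℤ) : ℤ := if 0 ≤ a ∧ 0 ≤ b then (a.toNat).choose (b.toNat) else 0

/-- Bessel function of the first kind of order 0 (power series). -/
noncomputable def besselJ0 (z : ℝ) : ℝ :=
  ∑' j : ℕ, (-1 : ℝ) ^ j * (z / 2) ^ (2 * j) / ((j.factorial : ℝ)) ^ 2

/-- Bessel function of the first kind of order 1 (power series). -/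
noncomputable def besselJ1 (z : ℝ) : ℝ :=
  ∑' j : ℕ, (-1 : ℝ) ^ j * (z / 2) ^ (2 * j + 1) / ((j.factorial : ℝ) * ((j + 1).factorial : ℝ))

/-- Truncated hypergeometric sum `₂F₁(a,b;c;z)` with integer parameters,
summed for `k = 0, …, K`. -/
noncomputable def hypF (a b c : ℤ) (K : ℕ) (z : ℝ) : ℝ :=
  ∑ k ∈ Finset.range (K + 1),
    (∏ l ∈ Finset.range k, (((a + l) * (b + l) : ℤ) : ℝ) / (((1 + l) * (c + l) : ℤ) : ℝ)) * z ^ k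

/-- `ω_p = (1/(2ε))·arcsin(sin(2pε)/(1+m²ε²))`. -/
noncomputable def omg (m ε p : ℝ) : ℝ :=
  (1 / (2 * ε)) * Real.arcsin (Real.sin (2 * p * ε) / (1 + m ^ 2 * ε ^ 2))

/-- `(-1)^q` for a real exponent `q`, with the convention `(-1)^(n/2) = iⁿ`:
`neg1pow q = exp(iπq)`. -/
noncomputable def neg1pow (q : ℝ) : ℂ := Complex.exp (Complex.I * Real.pi * q)

/-- The Airy function `Ai(λ) = (1/π)·lim_{R→∞} ∫₀^R cos(y³/3 + λy) dy`. -/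
noncomputable def AiryAi (lam : ℝ) : ℝ :=
  (1 / Real.pi) *
    Filter.limUnder Filter.atTop (fun R : ℝ => ∫ y in (0 : ℝ)..R, Real.cos (y ^ 3 / 3 + lam * y))

/-- The function `θ̃(v)` from Theorem `Airy` of the paper. -/
noncomputable def thetaTilde (m ε v : ℝ) : ℝ :=
  (1 / (2 * ε)) *
    (|v| * Real.arccos (|v| * Real.sqrt ((1 + m ^ 2 * ε ^ 2) ^ 2 - 1) / Real.sqrt (1 - v ^ 2)) -
      Real.arccos (Real.sqrt ((1 + m ^ 2 * ε ^ 2) ^ 2 - 1) /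
        ((1 + m ^ 2 * ε ^ 2) * Real.sqrt (1 - v ^ 2))))

/- ## auxiliary machinery -/


def gTurns (g : ℕ → Bool) (n : ℕ) : ℕ :=
  ((Finset.range n).filter (fun k => 0 < k ∧ g (k - 1) ≠ g k)).card

lemma pathTurns_eq_gTurns {n : ℕ} (d : Fin n → Bool) : pathTurns d = gTurns (extd d) n := rfl

lemma gTurns_succ (g : ℕ → Bool) (n : ℕ) :
    gTurns g (n+1) = gTurns g n + (if 0 < n ∧ g (n-1) ≠ g n then 1 else 0) := by
  unfold gTurns
  rw [Finset.range_add_one, Finset.filter_insert]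
  split_ifs with h
  · rw [Finset.card_insert_of_notMem (by simp)]
  · simp

lemma gTurns_parity (g : ℕ → Bool) (hg : g 0 = true) (n : ℕ) :
    (g (n-1) = true ↔ Even (gTurns g n)) := by
  induction n with
  | zero => simp [gTurns, hg]
  | succ n ih =>
    rw [gTurns_succ]
    rcases Nat.eq_zero_or_pos n with rfl | hn
    · simp [hg, gTurns]
    · have hn1 : n + 1 - 1 = n := rfl
      rw [hn1]
      by_cases hch : g (n-1) = g n
      · simp only [hch, ne_eq, not_true_eq_false, and_false, if_false, Nat.add_zero]
        rw [← hch]; exact ih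
      · simp only [hn, hch, ne_eq, not_false_eq_true, and_self, if_true]
        rw [Nat.even_add_one, ← ih]
        cases hgn : g n <;> cases hgn1 : g (n-1) <;> simp_all

lemma extd_snoc_lt {n : ℕ} (d : Fin n → Bool) (b : Bool) {k : ℕ} (h : k < n) :
    extd (Fin.snoc d b : Fin (n+1) → Bool) k = extd d k := by
  unfold extd
  rw [dif_pos (Nat.lt_succ_of_lt h), dif_pos h]
  exact Fin.snoc_castSucc (α := fun _ => Bool) b d ⟨k, h⟩

lemma extd_snoc_last {n : ℕ} (d : Fin n → Bool) (b : Bool) :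
    extd (Fin.snoc d b : Fin (n+1) → Bool) n = b := by
  unfold extd
  rw [dif_pos (Nat.lt_succ_self n)]
  exact Fin.snoc_last (α := fun _ => Bool) b d

lemma pathPos_snoc {n : ℕ} (d : Fin n → Bool) (b : Bool) {k : ℕ} (h : k ≤ n) :
    pathPos (Fin.snoc d b : Fin (n+1) → Bool) k = pathPos d k := by
  unfold pathPos
  exact Finset.sum_congr rfl fun i hi => by
    rw [extd_snoc_lt d b (lt_of_lt_of_le (Finset.mem_range.mp hi) h)]

lemma pathPos_snoc_succ {n : ℕ} (d : Fin n → Bool) (b : Bool) :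
    pathPos (Fin.snoc d b : Fin (n+1) → Bool) (n+1) = pathPos d n + dirZ b := by
  unfold pathPos
  rw [Finset.sum_range_succ, extd_snoc_last]
  congr 1
  exact Finset.sum_congr rfl fun i hi => by
    rw [extd_snoc_lt d b (Finset.mem_range.mp hi)]

lemma pathTurns_snoc {n : ℕ} (hn : 0 < n) (d : Fin n → Bool) (b : Bool) :
    pathTurns (Fin.snoc d b : Fin (n+1) → Bool)
      = pathTurns d + (if extd d (n-1) ≠ b then 1 else 0) := by
  rw [pathTurns_eq_gTurns, pathTurns_eq_gTurns]
  have h1 : gTurns (extd (Fin.snoc d b : Fin (n+1) → Bool)) (n+1)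
      = gTurns (extd (Fin.snoc d b : Fin (n+1) → Bool)) n
        + (if 0 < n ∧ extd (Fin.snoc d b : Fin (n+1) → Bool) (n-1)
            ≠ extd (Fin.snoc d b : Fin (n+1) → Bool) n then 1 else 0) := gTurns_succ _ n
  rw [h1, extd_snoc_last, extd_snoc_lt d b (Nat.sub_lt hn one_pos)]
  congr 1
  · unfold gTurns
    apply congrArg
    apply Finset.filter_congr
    intro k hk
    rcases Nat.eq_zero_or_pos k with rfl | hk0
    · simp
    · rw [extd_snoc_lt d b (Finset.mem_range.mp hk),
        extd_snoc_lt d b (lt_of_le_of_lt (Nat.sub_le k 1) (Finset.mem_range.mp hk))]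
  · simp [hn]

noncomputable def kwWgt (m ε : ℝ) (u : ℝ → ℝ → ℝ) {n : ℕ} (d : Fin n → Bool) : ℂ :=
  (-(Complex.I) * (m * ε)) ^ (pathTurns d) *
    ∏ k ∈ Finset.range n,
      ((u (ε * pathPos d k + ε * (dirZ (extd d k)) / 2) (ε * k + ε / 2) : ℝ) : ℂ)

noncomputable def kwS (m ε : ℝ) (u : ℝ → ℝ → ℝ) (n : ℕ) (X : ℤ) (b : Bool) : ℂ :=
  ∑ d ∈ Finset.univ.filter
      (fun d : Fin n → Bool =>
        extd d 0 = true ∧ pathPos d n = X ∧ extd d (n-1) = b),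
    kwWgt m ε u d

def snocEqv (n : ℕ) : ((Fin n → Bool) × Bool) ≃ (Fin (n+1) → Bool) where
  toFun p := Fin.snoc p.1 p.2
  invFun d := (Fin.init d, d (Fin.last n))
  left_inv p := by simp
  right_inv d := Fin.snoc_init_self d

lemma kwWgt_snoc (m ε : ℝ) (u : ℝ → ℝ → ℝ) {n : ℕ} (hn : 0 < n) (d : Fin n → Bool) (b : Bool) :
    kwWgt m ε u (Fin.snoc d b : Fin (n+1) → Bool)
      = (if extd d (n-1) ≠ b then (-(Complex.I) * (m * ε)) else 1) * kwWgt m ε u d *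
        ((u (ε * pathPos d n + ε * (dirZ b) / 2) (ε * n + ε / 2) : ℝ) : ℂ) := by
  unfold kwWgt
  rw [pathTurns_snoc hn, pow_add, Finset.prod_range_succ, extd_snoc_last,
    pathPos_snoc d b (le_refl n)]
  have hprod : ∀ k ∈ Finset.range n,
      ((u (ε * pathPos (Fin.snoc d b : Fin (n+1) → Bool) k
          + ε * (dirZ (extd (Fin.snoc d b : Fin (n+1) → Bool) k)) / 2) (ε * k + ε / 2) : ℝ) : ℂ)
      = ((u (ε * pathPos d k + ε * (dirZ (extd d k)) / 2) (ε * k + ε / 2) : ℝ) : ℂ) := by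
    intro k hk
    rw [pathPos_snoc d b (le_of_lt (Finset.mem_range.mp hk)),
      extd_snoc_lt d b (Finset.mem_range.mp hk)]
  rw [Finset.prod_congr rfl hprod]
  split_ifs <;> ring

lemma kwS_succ (m ε : ℝ) (u : ℝ → ℝ → ℝ) {n : ℕ} (hn : 0 < n) (X : ℤ) (b : Bool) :
    kwS m ε u (n+1) X b
      = ((u (ε * (X - dirZ b) + ε * (dirZ b) / 2) (ε * n + ε / 2) : ℝ) : ℂ) *
        (kwS m ε u n (X - dirZ b) b
          + (-(Complex.I) * (m * ε)) * kwS m ε u n (X - dirZ b) (!b)) := by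
  unfold kwS
  rw [Finset.sum_filter, Finset.sum_filter, Finset.sum_filter,
    ← Equiv.sum_comp (snocEqv n) _, Fintype.sum_prod_type]
  rw [mul_add, Finset.mul_sum, Finset.mul_sum, Finset.mul_sum, ← Finset.sum_add_distrib]
  apply Finset.sum_congr rfl
  intro d _
  have hlast : ∀ b' : Bool, extd (Fin.snoc d b' : Fin (n+1) → Bool) (n+1-1) = b' :=
    fun b' => extd_snoc_last d b'
  rw [Fintype.sum_bool]
  simp only [snocEqv, Equiv.coe_fn_mk]
  simp only [hlast true, hlast false]
  have h0 : ∀ b' : Bool, extd (Fin.snoc d b' : Fin (n+1) → Bool) 0 = extd d 0 :=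
    fun b' => extd_snoc_lt d b' hn
  simp only [h0 true, h0 false, pathPos_snoc_succ]
  cases b
  · simp only [Bool.true_eq_false, and_false, if_false, zero_add, and_true]
    by_cases hc : extd d 0 = true ∧ pathPos d n + dirZ false = X
    · rw [if_pos hc, kwWgt_snoc m ε u hn d false]
      have hpos : pathPos d n = X - dirZ false := by omega
      have hcast : ((pathPos d n : ℤ) : ℝ) = (X : ℝ) - ((dirZ false : ℤ) : ℝ) := by
        rw [hpos]; push_cast; ring
      rw [hcast]
      by_cases hb : extd d (n-1) = false
      · rw [if_neg (by simp [hb]), if_pos ⟨hc.1, hpos, hb⟩, if_neg (by simp [hb]), one_mul]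
        ring
      · have hb' : extd d (n-1) = true := by simpa using hb
        rw [if_pos (by simp [hb']), if_neg (by simp [hb']),
          if_pos ⟨hc.1, hpos, by simp [hb']⟩]
        ring
    · rw [if_neg hc, if_neg (by rintro ⟨h1, h2, h3⟩; exact hc ⟨h1, by omega⟩),
        if_neg (by rintro ⟨h1, h2, h3⟩; exact hc ⟨h1, by omega⟩)]
      ring
  · simp only [Bool.false_eq_true, and_false, if_false, add_zero, and_true]
    by_cases hc : extd d 0 = true ∧ pathPos d n + dirZ true = X
    · rw [if_pos hc, kwWgt_snoc m ε u hn d true]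
      have hpos : pathPos d n = X - dirZ true := by omega
      have hcast : ((pathPos d n : ℤ) : ℝ) = (X : ℝ) - ((dirZ true : ℤ) : ℝ) := by
        rw [hpos]; push_cast; ring
      rw [hcast]
      by_cases hb : extd d (n-1) = true
      · rw [if_neg (by simp [hb]), if_pos ⟨hc.1, hpos, hb⟩, if_neg (by simp [hb]), one_mul]
        ring
      · have hb' : extd d (n-1) = false := by simpa using hb
        rw [if_pos (by simp [hb']), if_neg (by simp [hb']),
          if_pos ⟨hc.1, hpos, by simp [hb']⟩]
        ring
    · rw [if_neg hc, if_neg (by rintro ⟨h1, h2, h3⟩; exact hc ⟨h1, by omega⟩),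
        if_neg (by rintro ⟨h1, h2, h3⟩; exact hc ⟨h1, by omega⟩)]
      ring

lemma even_pow_real (c : ℝ) {T : ℕ} (h : Even T) :
    ∃ r : ℝ, (-(Complex.I) * ((c : ℝ) : ℂ))^T = (r : ℂ) := by
  obtain ⟨k, hk⟩ := h
  refine ⟨(-(c^2))^k, ?_⟩
  have h2 : (-(Complex.I) * ((c : ℝ) : ℂ))^2 = ((-(c^2) : ℝ) : ℂ) := by
    rw [show (-(Complex.I) * ((c:ℝ):ℂ))^2 = Complex.I^2 * ((c:ℝ):ℂ)^2 by ring, Complex.I_sq]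
    push_cast; ring
  rw [show T = 2*k by omega, pow_mul, h2, ← Complex.ofReal_pow]

lemma odd_pow_real (c : ℝ) {T : ℕ} (h : ¬ Even T) :
    ∃ r : ℝ, (-(Complex.I) * ((c : ℝ) : ℂ))^T = (r : ℂ) * (-(Complex.I)) := by
  rw [Nat.not_even_iff_odd] at h
  obtain ⟨k, hk⟩ := h
  refine ⟨(-(c^2))^k * c, ?_⟩
  have h2 : (-(Complex.I) * ((c : ℝ) : ℂ))^2 = ((-(c^2) : ℝ) : ℂ) := by
    rw [show (-(Complex.I) * ((c:ℝ):ℂ))^2 = Complex.I^2 * ((c:ℝ):ℂ)^2 by ring, Complex.I_sq]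
    push_cast; ring
  rw [hk, pow_add, pow_mul, pow_one, h2, ← Complex.ofReal_pow]
  push_cast; ring

lemma kwWgt_cast (m ε : ℝ) (u : ℝ → ℝ → ℝ) {n : ℕ} (d : Fin n → Bool) :
    kwWgt m ε u d = (-(Complex.I) * ((m * ε : ℝ) : ℂ)) ^ (pathTurns d) *
      ((∏ k ∈ Finset.range n,
        (u (ε * pathPos d k + ε * (dirZ (extd d k)) / 2) (ε * k + ε / 2) : ℝ) : ℝ) : ℂ) := by
  unfold kwWgt
  rw [Complex.ofReal_prod]
  push_cast
  ring

lemma kwS_true_im (m ε : ℝ) (u : ℝ → ℝ → ℝ) (n : ℕ) (X : ℤ) :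
    (kwS m ε u n X true).im = 0 := by
  unfold kwS
  rw [Complex.im_sum]
  apply Finset.sum_eq_zero
  intro d hd
  simp only [Finset.mem_filter] at hd
  obtain ⟨-, h0, -, hl⟩ := hd
  have heven : Even (pathTurns d) := by
    rw [pathTurns_eq_gTurns]
    exact (gTurns_parity (extd d) h0 n).mp hl
  obtain ⟨r, hr⟩ := even_pow_real (m * ε) heven
  rw [kwWgt_cast, hr, ← Complex.ofReal_mul, Complex.ofReal_im]

lemma kwS_false_re (m ε : ℝ) (u : ℝ → ℝ → ℝ) (n : ℕ) (X : ℤ) :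
    (kwS m ε u n X false).re = 0 := by
  unfold kwS
  rw [Complex.re_sum]
  apply Finset.sum_eq_zero
  intro d hd
  simp only [Finset.mem_filter] at hd
  obtain ⟨-, h0, -, hl⟩ := hd
  have hodd : ¬ Even (pathTurns d) := by
    rw [pathTurns_eq_gTurns]
    intro h
    rw [← gTurns_parity (extd d) h0 n] at h
    simp [hl] at h
  obtain ⟨r, hr⟩ := odd_pow_real (m * ε) hodd
  rw [kwWgt_cast, hr]
  set P := ∏ k ∈ Finset.range n,
      (u (ε * pathPos d k + ε * (dirZ (extd d k)) / 2) (ε * k + ε / 2) : ℝ) with hP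
  rw [show (↑r * -Complex.I) * ((P : ℝ) : ℂ) = ((r * P : ℝ) : ℂ) * (-Complex.I) by
    push_cast; ring]
  simp [Complex.mul_re]

lemma kwS_split (m ε : ℝ) (u : ℝ → ℝ → ℝ) (n : ℕ) (X : ℤ) :
    ∑ d ∈ Finset.univ.filter
        (fun d : Fin n → Bool => extd d 0 = true ∧ pathPos d n = X),
      kwWgt m ε u d
      = kwS m ε u n X true + kwS m ε u n X false := by
  unfold kwS
  rw [← Finset.sum_filter_add_sum_filter_not
      (Finset.univ.filter (fun d : Fin n → Bool => extd d 0 = true ∧ pathPos d n = X))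
      (fun d => extd d (n-1) = true) (kwWgt m ε u)]
  congr 1
  · apply Finset.sum_congr _ (fun _ _ => rfl)
    rw [Finset.filter_filter]
    apply Finset.filter_congr
    intro d _
    simp [and_assoc]
  · apply Finset.sum_congr _ (fun _ _ => rfl)
    rw [Finset.filter_filter]
    apply Finset.filter_congr
    intro d _
    simp [and_assoc]

lemma kwf_eq (m ε : ℝ) (u : ℝ → ℝ → ℝ) (x t : ℝ) (n : ℕ) (X : ℤ)
    (hn : (⌊t/ε⌋).toNat = n) (hX : ⌊x/ε⌋ = X) :
    kwf m ε u x t = (((1 + m ^ 2 * ε ^ 2) ^ ((1 - t / ε) / 2) : ℝ) : ℂ) * Complex.I *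
      (kwS m ε u n X true + kwS m ε u n X false) := by
  subst hn hX
  unfold kwf
  congr 1
  exact kwS_split m ε u _ _


/-- Lemma (Dirac equation in the homogeneous electromagnetic field on the lattice). -/
theorem dirac_equation_on_lattice (m ε : ℝ) (hm : 0 ≤ m) (hε : 0 < ε) (ξ η : ℝ)
    (hξ : ∃ k : ℤ, ξ = ε * (k : ℝ)) (hη : ∃ k : ℤ, η = ε * (k : ℝ))
    (hξpos : 0 < ξ) (hηpos : 0 < η) :
    ka1 m ε (uhom ε) (ξ - η + ε) (ξ + η + ε)
      = (1 / Real.sqrt (1 + m ^ 2 * ε ^ 2)) * uhom ε (ξ - η + 3 * ε / 2) (ξ + η + ε / 2)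
        * (ka1 m ε (uhom ε) (ξ - η + 2 * ε) (ξ + η)
            + m * ε * ka2 m ε (uhom ε) (ξ - η + 2 * ε) (ξ + η)) ∧
    ka2 m ε (uhom ε) (ξ - η + ε) (ξ + η + ε)
      = (1 / Real.sqrt (1 + m ^ 2 * ε ^ 2)) * uhom ε (ξ - η + ε / 2) (ξ + η + ε / 2)
        * (-(m * ε) * ka1 m ε (uhom ε) (ξ - η) (ξ + η)
            + ka2 m ε (uhom ε) (ξ - η) (ξ + η)) := by
  obtain ⟨aZ, haZ⟩ := hξ
  obtain ⟨bZ, hbZ⟩ := hη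
  have haR : 0 < (aZ : ℝ) := by nlinarith [hξpos]
  have hbR : 0 < (bZ : ℝ) := by nlinarith [hηpos]
  have ha1 : 1 ≤ aZ := by exact_mod_cast Int.cast_pos.mp haR
  have hb1 : 1 ≤ bZ := by exact_mod_cast Int.cast_pos.mp hbR
  set A : ℝ := 1 + m ^ 2 * ε ^ 2 with hAdef
  have hA : 0 < A := by positivity
  set N : ℕ := (aZ + bZ).toNat with hNdef
  have hNZ : (N : ℤ) = aZ + bZ := Int.toNat_of_nonneg (by omega)
  have hN1 : 0 < N := by omega
  have hNR : (N : ℝ) = (aZ : ℝ) + (bZ : ℝ) := by exact_mod_cast hNZ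
  set X : ℤ := aZ - bZ + 1 with hXdef
  have hdf : dirZ false = -1 := rfl
  have hdt : dirZ true = 1 := rfl
  have hfl : ∀ z : ℤ, (⌊(ε * (z : ℝ)) / ε⌋) = z := fun z => by
    rw [mul_comm, mul_div_assoc, div_self hε.ne', mul_one, Int.floor_intCast]
  have e1 : ξ - η + ε = ε * ((X : ℤ) : ℝ) := by rw [haZ, hbZ, hXdef]; push_cast; ring
  have e2 : ξ + η + ε = ε * ((aZ + bZ + 1 : ℤ) : ℝ) := by rw [haZ, hbZ]; push_cast; ring
  have e3 : ξ - η + 2 * ε = ε * ((X - dirZ false : ℤ) : ℝ) := by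
    rw [haZ, hbZ, hXdef]; push_cast [hdf, hdt]; ring
  have e4 : ξ + η = ε * ((aZ + bZ : ℤ) : ℝ) := by rw [haZ, hbZ]; push_cast; ring
  have e5 : ξ - η = ε * ((X - dirZ true : ℤ) : ℝ) := by
    rw [haZ, hbZ, hXdef]; push_cast [hdf, hdt]; ring
  have f1 : (⌊(ξ + η + ε) / ε⌋).toNat = N + 1 := by rw [e2, hfl]; omega
  have f2 : ⌊(ξ - η + ε) / ε⌋ = X := by rw [e1, hfl]
  have f3 : (⌊(ξ + η) / ε⌋).toNat = N := by rw [e4, hfl]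
  have f4 : ⌊(ξ - η + 2 * ε) / ε⌋ = X - dirZ false := by rw [e3, hfl]
  have f5 : ⌊(ξ - η) / ε⌋ = X - dirZ true := by rw [e5, hfl]
  -- norm factors
  have g1 : (ξ + η + ε) / ε = (aZ : ℝ) + bZ + 1 := by
    rw [e2, mul_comm, mul_div_assoc, div_self hε.ne', mul_one]; push_cast; ring
  have g2 : (ξ + η) / ε = (aZ : ℝ) + bZ := by
    rw [e4, mul_comm, mul_div_assoc, div_self hε.ne', mul_one]; push_cast; ring
  set C1 : ℝ := A ^ ((1 - ((aZ : ℝ) + bZ + 1)) / 2) with hC1def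
  set C0 : ℝ := A ^ ((1 - ((aZ : ℝ) + bZ)) / 2) with hC0def
  have hC : C1 = C0 * (Real.sqrt A)⁻¹ := by
    rw [hC1def, hC0def, show (1 - ((aZ : ℝ) + bZ + 1)) / 2
        = (1 - ((aZ : ℝ) + bZ)) / 2 + (-(1/2)) by ring,
      Real.rpow_add hA, Real.rpow_neg hA.le, ← Real.sqrt_eq_rpow]
  -- kwf rewrites
  have k1 : kwf m ε (uhom ε) (ξ - η + ε) (ξ + η + ε)
      = ((C1 : ℝ) : ℂ) * Complex.I *
        (kwS m ε (uhom ε) (N+1) X true + kwS m ε (uhom ε) (N+1) X false) := by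
    rw [kwf_eq m ε (uhom ε) _ _ (N+1) X f1 f2, g1]
  have k2 : kwf m ε (uhom ε) (ξ - η + 2 * ε) (ξ + η)
      = ((C0 : ℝ) : ℂ) * Complex.I *
        (kwS m ε (uhom ε) N (X - dirZ false) true + kwS m ε (uhom ε) N (X - dirZ false) false) := by
    rw [kwf_eq m ε (uhom ε) _ _ N (X - dirZ false) f3 f4, g2]
  have k3 : kwf m ε (uhom ε) (ξ - η) (ξ + η)
      = ((C0 : ℝ) : ℂ) * Complex.I *
        (kwS m ε (uhom ε) N (X - dirZ true) true + kwS m ε (uhom ε) N (X - dirZ true) false) := by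
    rw [kwf_eq m ε (uhom ε) _ _ N (X - dirZ true) f3 f5, g2]
  -- u argument values
  have harg1 : ε * ((X : ℝ) - ((dirZ false : ℤ) : ℝ)) + ε * ((dirZ false : ℤ) : ℝ) / 2
      = ξ - η + 3 * ε / 2 := by
    rw [haZ, hbZ, hXdef]; push_cast [hdf, hdt]; ring
  have harg2 : ε * ((X : ℝ) - ((dirZ true : ℤ) : ℝ)) + ε * ((dirZ true : ℤ) : ℝ) / 2
      = ξ - η + ε / 2 := by
    rw [haZ, hbZ, hXdef]; push_cast [hdf, hdt]; ring
  have htime : ε * (N : ℝ) + ε / 2 = ξ + η + ε / 2 := by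
    rw [hNR, haZ, hbZ]; ring
  -- recurrences
  have r1 : kwS m ε (uhom ε) (N+1) X false
      = ((uhom ε (ξ - η + 3 * ε / 2) (ξ + η + ε / 2) : ℝ) : ℂ) *
        (kwS m ε (uhom ε) N (X - dirZ false) false
          + (-(Complex.I) * (m * ε)) * kwS m ε (uhom ε) N (X - dirZ false) true) := by
    rw [kwS_succ m ε (uhom ε) hN1 X false, harg1, htime]; simp
  have r2 : kwS m ε (uhom ε) (N+1) X true
      = ((uhom ε (ξ - η + ε / 2) (ξ + η + ε / 2) : ℝ) : ℂ) *
        (kwS m ε (uhom ε) N (X - dirZ true) true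
          + (-(Complex.I) * (m * ε)) * kwS m ε (uhom ε) N (X - dirZ true) false) := by
    rw [kwS_succ m ε (uhom ε) hN1 X true, harg2, htime]; simp
  have hSA : (kwS m ε (uhom ε) (N+1) X true).im = 0 := kwS_true_im m ε (uhom ε) (N+1) X
  have hSB : (kwS m ε (uhom ε) (N+1) X false).re = 0 := kwS_false_re m ε (uhom ε) (N+1) X
  have hT1 : (kwS m ε (uhom ε) N (X - dirZ false) true).im = 0 := kwS_true_im _ _ _ _ _
  have hF1 : (kwS m ε (uhom ε) N (X - dirZ false) false).re = 0 := kwS_false_re _ _ _ _ _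
  have hT2 : (kwS m ε (uhom ε) N (X - dirZ true) true).im = 0 := kwS_true_im _ _ _ _ _
  have hF2 : (kwS m ε (uhom ε) N (X - dirZ true) false).re = 0 := kwS_false_re _ _ _ _ _
  constructor
  · unfold ka1 ka2
    rw [k1, k2, r1, hC, one_div]
    simp only [Complex.add_re, Complex.add_im, Complex.mul_re, Complex.mul_im,
      Complex.I_re, Complex.I_im, Complex.ofReal_re, Complex.ofReal_im,
      Complex.neg_re, Complex.neg_im, hSA, hT1, hF1]
    ring
  · unfold ka1 ka2
    rw [k1, k3, r2, hC, one_div]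
    simp only [Complex.add_re, Complex.add_im, Complex.mul_re, Complex.mul_im,
      Complex.I_re, Complex.I_im, Complex.ofReal_re, Complex.ofReal_im,
      Complex.neg_re, Complex.neg_im, hSB, hT2, hF2]
    ring
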